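/- arXiv:1404.0628 — 2 statements merged into one kernel-verified Lean document; each statement's English description precedes it below -/
import Mathlib

section
/- Let R be a ring and n ≥ 0. For every staircase chain map x from an (n+2)-complex C to a 2-complex X of R-modules, the family G_n(C, x) is an (n+3)-complex: the composite of any n+3 consecutive differentials of G_n(C, x) is zero. -/
/-- A ℤ-indexed family of `R`-modules together with degree `+1` linear maps
(the common underlying datum of `N`-complexes for all `N`). -/
structure ZSys (R : Type) [Ring R] where
  X : ℤ → Type
  [gr : ∀ i, AddCommGroup (X i)]
  [mo : ∀ i, Module R (X i)]
  d : ∀ i : ℤ, X i →ₗ[R] X (i + 1)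

attribute [instance] ZSys.gr ZSys.mo

variable {R : Type} [Ring R]

/-- Transport along an equality of degrees. -/
def ZSys.cast (W : ZSys R) {i j : ℤ} (h : i = j) : W.X i →ₗ[R] W.X j := by
  subst h; exact LinearMap.id

/-- The composite of `k` consecutive differentials, `W.X i →ₗ W.X (i + k)`. -/
def ZSys.dpow (W : ZSys R) : (k : ℕ) → (i : ℤ) → (W.X i →ₗ[R] W.X (i + (k : ℤ)))
  | 0, i => W.cast (by simp)
  | k + 1, i => W.cast (by push_cast; ring) ∘ₗ W.dpow k (i + 1) ∘ₗ W.d i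

/-- `W` is an `N`-complex: the composite of any `N` consecutive differentials is zero. -/
def IsNComplex (N : ℕ) (W : ZSys R) : Prop := ∀ i : ℤ, W.dpow N i = 0

/-- A morphism of such systems (in particular, of `N`-complexes): a family of linear maps
commuting with the differentials. -/
def IsChainMap (V W : ZSys R) (f : ∀ i : ℤ, V.X i →ₗ[R] W.X i) : Prop :=
  ∀ i : ℤ, W.d i ∘ₗ f i = f (i + 1) ∘ₗ V.d i

/-- `h` is a homotopy from `f` to `g` (morphisms of `N`-complexes `V → W`):
`g - f = Σ_{j=1}^{N} d^{N-j} ∘ h ∘ d^{j-1}` in every degree. -/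
def IsHomotopy (N : ℕ) (V W : ZSys R) (f g : ∀ i : ℤ, V.X i →ₗ[R] W.X i)
    (h : ∀ i : ℤ, V.X (i + (N : ℤ) - 1) →ₗ[R] W.X i) : Prop :=
  ∀ i : ℤ, g i - f i =
    ∑ j : Fin N,
      W.cast (show (i + ((j : ℕ) : ℤ) - (N : ℤ) + 1) + ((N - 1 - (j : ℕ) : ℕ) : ℤ) = i by
          have hj := j.isLt; omega) ∘ₗ
        W.dpow (N - 1 - (j : ℕ)) (i + ((j : ℕ) : ℤ) - (N : ℤ) + 1) ∘ₗ
        h (i + ((j : ℕ) : ℤ) - (N : ℤ) + 1) ∘ₗ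
        V.cast (show i + ((j : ℕ) : ℤ) = (i + ((j : ℕ) : ℤ) - (N : ℤ) + 1) + (N : ℤ) - 1 by
          ring) ∘ₗ
        V.dpow (j : ℕ) i

/-- Homotopy equivalence of `N`-complexes `W` and `V`: morphisms `f : W → V` and
`g : V → W` with `g ∘ f` homotopic to `id_W` and `f ∘ g` homotopic to `id_V`. -/
def HomotopyEquivN (N : ℕ) (W V : ZSys R) : Prop :=
  ∃ (f : ∀ i : ℤ, W.X i →ₗ[R] V.X i) (g : ∀ i : ℤ, V.X i →ₗ[R] W.X i),
    IsChainMap W V f ∧ IsChainMap V W g ∧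
    (∃ h, IsHomotopy N W W (fun i => g i ∘ₗ f i) (fun _ => LinearMap.id) h) ∧
    (∃ h, IsHomotopy N V V (fun i => f i ∘ₗ g i) (fun _ => LinearMap.id) h)
section DivModLemmas

private theorem div_succ_of_lt {i m : ℤ} (hm : 0 < m) (h : i % m + 1 < m) :
    (i + 1) / m = i / m := by
  have h0 : 0 ≤ i % m := Int.emod_nonneg i (by omega)
  have key : i + 1 = (i % m + 1) + m * (i / m) := by
    have := Int.emod_add_mul_ediv i m; linarith
  rw [key, Int.add_mul_ediv_left _ _ (show m ≠ 0 by omega),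
    Int.ediv_eq_zero_of_lt (by omega) h, zero_add]

private theorem mod_succ_of_lt {i m : ℤ} (hm : 0 < m) (h : i % m + 1 < m) :
    (i + 1) % m = i % m + 1 := by
  have h0 : 0 ≤ i % m := Int.emod_nonneg i (by omega)
  have key : i + 1 = (i % m + 1) + m * (i / m) := by
    have := Int.emod_add_mul_ediv i m; linarith
  rw [key, Int.add_mul_emod_self_left, Int.emod_eq_of_lt (by omega) h]

private theorem div_succ_of_eq {i m : ℤ} (hm : 0 < m) (h : i % m = m - 1) :
    (i + 1) / m = i / m + 1 := by
  have key : i + 1 = m * (i / m + 1) := by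
    have := Int.emod_add_mul_ediv i m; ring_nf; ring_nf at this; linarith
  rw [key, Int.mul_ediv_cancel_left _ (show m ≠ 0 by omega)]

private theorem mod_succ_of_eq {i m : ℤ} (hm : 0 < m) (h : i % m = m - 1) :
    (i + 1) % m = 0 := by
  have key : i + 1 = m * (i / m + 1) := by
    have := Int.emod_add_mul_ediv i m; ring_nf; ring_nf at this; linarith
  rw [key, Int.mul_emod_right]

private theorem emod_bounds {i m : ℤ} (hm : 0 < m) : 0 ≤ i % m ∧ i % m < m :=
  ⟨Int.emod_nonneg i (by omega), Int.emod_lt_of_pos i hm⟩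

end DivModLemmas

/-- A staircase chain map from an `(n+2)`-complex `C` to a `2`-complex `X`: maps
`x_{2m} : C^{m(n+2)} → X^{2m}` and `x_{2m+1} : C^{m(n+2)+n+1} → X^{2m+1}` with
`d ∘ x_{2m} = x_{2m+1} ∘ d^{n+1}` and `d ∘ x_{2m+1} = x_{2m+2} ∘ d`. -/
structure Staircase (R : Type) [Ring R] (n : ℕ) (C Xc : ZSys R) where
  xe : ∀ m : ℤ, C.X (m * ((n : ℤ) + 2)) →ₗ[R] Xc.X (2 * m)
  xo : ∀ m : ℤ, C.X (m * ((n : ℤ) + 2) + (n : ℤ) + 1) →ₗ[R] Xc.X (2 * m + 1)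
  comm_e : ∀ m : ℤ,
    Xc.d (2 * m) ∘ₗ xe m
      = xo m ∘ₗ C.cast (show m * ((n : ℤ) + 2) + ((n + 1 : ℕ) : ℤ)
            = m * ((n : ℤ) + 2) + (n : ℤ) + 1 by push_cast; ring)
          ∘ₗ C.dpow (n + 1) (m * ((n : ℤ) + 2))
  comm_o : ∀ m : ℤ,
    Xc.cast (show 2 * m + 1 + 1 = 2 * (m + 1) by ring) ∘ₗ Xc.d (2 * m + 1) ∘ₗ xo m
      = xe (m + 1) ∘ₗ C.cast (show m * ((n : ℤ) + 2) + (n : ℤ) + 1 + 1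
            = (m + 1) * ((n : ℤ) + 2) by ring)
          ∘ₗ C.d (m * ((n : ℤ) + 2) + (n : ℤ) + 1)

/-- The family `G_n(C, x)` associated with a staircase chain map `x` from an
`(n+2)`-complex `C` to a `2`-complex `X`. Writing `i = q(n+3) + r` with `0 ≤ r ≤ n+2`,
its degree-`i` object is `C^{q(n+2)+r} ⊕ X^{2q}` for `0 ≤ r ≤ n+1` and
`C^{(q+1)(n+2)} ⊕ X^{2q+1}` for `r = n+2` (note `q(n+2)+r = i - q` in all cases); its
differentials are `[[d,0],[0,1]]` (for `0 ≤ r ≤ n`), `[[−d,0],[x_{2q+1},d]]`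
(for `r = n+1`) and `[[−1,0],[x_{2q+2},d]]` (for `r = n+2`). -/
def Gsys (R : Type) [Ring R] (n : ℕ) (C Xc : ZSys R) (x : Staircase R n C Xc) : ZSys R where
  X i := C.X (i - i / ((n : ℤ) + 3)) ×
    Xc.X (if i % ((n : ℤ) + 3) = (n : ℤ) + 2 then 2 * (i / ((n : ℤ) + 3)) + 1
      else 2 * (i / ((n : ℤ) + 3)))
  gr i := by infer_instance
  mo i := by infer_instance
  d i :=
    if hA : i % ((n : ℤ) + 3) ≤ (n : ℤ) then
      -- `[[d, 0], [0, 1]]`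
      LinearMap.prod
        (C.cast (show i - i / ((n : ℤ) + 3) + 1 = (i + 1) - (i + 1) / ((n : ℤ) + 3) by
            rw [div_succ_of_lt (by positivity) (by linarith)]; ring)
          ∘ₗ C.d (i - i / ((n : ℤ) + 3)) ∘ₗ LinearMap.fst R _ _)
        (Xc.cast (show (if i % ((n : ℤ) + 3) = (n : ℤ) + 2 then 2 * (i / ((n : ℤ) + 3)) + 1
              else 2 * (i / ((n : ℤ) + 3)))
            = (if (i + 1) % ((n : ℤ) + 3) = (n : ℤ) + 2 then 2 * ((i + 1) / ((n : ℤ) + 3)) + 1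
              else 2 * ((i + 1) / ((n : ℤ) + 3))) by
            rw [if_neg (by intro hc; rw [hc] at hA; linarith),
              if_neg (by rw [mod_succ_of_lt (by positivity) (by linarith)]; intro hc; linarith),
              div_succ_of_lt (by positivity) (by linarith)])
          ∘ₗ LinearMap.snd R _ _)
    else if hB : i % ((n : ℤ) + 3) = (n : ℤ) + 1 then
      -- `[[−d, 0], [x_{2q+1}, d]]`
      LinearMap.prod
        (-(C.cast (show i - i / ((n : ℤ) + 3) + 1 = (i + 1) - (i + 1) / ((n : ℤ) + 3) by
            rw [div_succ_of_lt (by positivity) (by rw [hB]; linarith)]; ring)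
          ∘ₗ C.d (i - i / ((n : ℤ) + 3)) ∘ₗ LinearMap.fst R _ _))
        (Xc.cast (show 2 * (i / ((n : ℤ) + 3)) + 1
            = (if (i + 1) % ((n : ℤ) + 3) = (n : ℤ) + 2 then 2 * ((i + 1) / ((n : ℤ) + 3)) + 1
              else 2 * ((i + 1) / ((n : ℤ) + 3))) by
            rw [if_pos (by rw [mod_succ_of_lt (by positivity) (by rw [hB]; linarith), hB]; ring),
              div_succ_of_lt (by positivity) (by rw [hB]; linarith)])
          ∘ₗ x.xo (i / ((n : ℤ) + 3))
          ∘ₗ C.cast (show i - i / ((n : ℤ) + 3)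
              = (i / ((n : ℤ) + 3)) * ((n : ℤ) + 2) + (n : ℤ) + 1 by
              linear_combination (-1 : ℤ) * Int.mul_ediv_add_emod i ((n : ℤ) + 3) + hB)
          ∘ₗ LinearMap.fst R _ _
        + Xc.cast (show 2 * (i / ((n : ℤ) + 3)) + 1
            = (if (i + 1) % ((n : ℤ) + 3) = (n : ℤ) + 2 then 2 * ((i + 1) / ((n : ℤ) + 3)) + 1
              else 2 * ((i + 1) / ((n : ℤ) + 3))) by
            rw [if_pos (by rw [mod_succ_of_lt (by positivity) (by rw [hB]; linarith), hB]; ring),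
              div_succ_of_lt (by positivity) (by rw [hB]; linarith)])
          ∘ₗ Xc.d (2 * (i / ((n : ℤ) + 3)))
          ∘ₗ Xc.cast (show (if i % ((n : ℤ) + 3) = (n : ℤ) + 2 then 2 * (i / ((n : ℤ) + 3)) + 1
                else 2 * (i / ((n : ℤ) + 3))) = 2 * (i / ((n : ℤ) + 3)) by
              rw [if_neg (by rw [hB]; intro hc; linarith)])
          ∘ₗ LinearMap.snd R _ _)
    else
      -- `[[−1, 0], [x_{2q+2}, d]]`; here `i % (n+3) = n+2`.
      have hC2 : i % ((n : ℤ) + 3) = (n : ℤ) + 2 := by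
        rcases emod_bounds (show (0 : ℤ) < (n : ℤ) + 3 by positivity) (i := i) with ⟨hb1, hb2⟩
        push_neg at hA
        rcases lt_or_eq_of_le (show (n : ℤ) + 1 ≤ i % ((n : ℤ) + 3) by linarith) with hlt | heq
        · linarith
        · exact absurd heq.symm hB
      have hmod1 : (i + 1) % ((n : ℤ) + 3) = 0 :=
        mod_succ_of_eq (by positivity) (by rw [hC2]; ring)
      have hdiv1 : (i + 1) / ((n : ℤ) + 3) = i / ((n : ℤ) + 3) + 1 :=
        div_succ_of_eq (by positivity) (by rw [hC2]; ring)
      have hneq : ¬((i + 1) % ((n : ℤ) + 3) = (n : ℤ) + 2) := by rw [hmod1]; omega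
      LinearMap.prod
        (-(C.cast (show i - i / ((n : ℤ) + 3) = (i + 1) - (i + 1) / ((n : ℤ) + 3) by
            rw [hdiv1]; ring)
          ∘ₗ LinearMap.fst R _ _))
        (Xc.cast (show 2 * (i / ((n : ℤ) + 3) + 1)
            = (if (i + 1) % ((n : ℤ) + 3) = (n : ℤ) + 2 then 2 * ((i + 1) / ((n : ℤ) + 3)) + 1
              else 2 * ((i + 1) / ((n : ℤ) + 3))) by
            rw [if_neg hneq, hdiv1])
          ∘ₗ x.xe (i / ((n : ℤ) + 3) + 1)
          ∘ₗ C.cast (show i - i / ((n : ℤ) + 3)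
              = (i / ((n : ℤ) + 3) + 1) * ((n : ℤ) + 2) by
              linear_combination (-1 : ℤ) * Int.mul_ediv_add_emod i ((n : ℤ) + 3) + hC2)
          ∘ₗ LinearMap.fst R _ _
        + Xc.cast (show 2 * (i / ((n : ℤ) + 3)) + 1 + 1
            = (if (i + 1) % ((n : ℤ) + 3) = (n : ℤ) + 2 then 2 * ((i + 1) / ((n : ℤ) + 3)) + 1
              else 2 * ((i + 1) / ((n : ℤ) + 3))) by
            rw [if_neg hneq, hdiv1]; ring)
          ∘ₗ Xc.d (2 * (i / ((n : ℤ) + 3)) + 1)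
          ∘ₗ Xc.cast (show (if i % ((n : ℤ) + 3) = (n : ℤ) + 2 then 2 * (i / ((n : ℤ) + 3)) + 1
                else 2 * (i / ((n : ℤ) + 3))) = 2 * (i / ((n : ℤ) + 3)) + 1 by
              rw [if_pos hC2])
          ∘ₗ LinearMap.snd R _ _)

section Helpers

variable (W : ZSys R)

theorem ZSys.cast_rfl {i : ℤ} (h : i = i) (a : W.X i) : W.cast h a = a := rfl

theorem ZSys.cast_cast {i j k : ℤ} (h : i = j) (h' : j = k) (a : W.X i) :
    W.cast h' (W.cast h a) = W.cast (h.trans h') a := by subst h; subst h'; rfl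

theorem ZSys.cast_eq_iff {i j : ℤ} (h : i = j) (a : W.X i) (b : W.X j) :
    W.cast h a = b ↔ a = W.cast h.symm b := by subst h; exact Iff.rfl

theorem ZSys.cast_eq_zero {i j : ℤ} (h : i = j) (a : W.X i) :
    W.cast h a = 0 ↔ a = 0 := by subst h; exact Iff.rfl

theorem ZSys.d_cast {i j : ℤ} (h : i = j) (a : W.X i) :
    W.d j (W.cast h a) = W.cast (by rw [h]) (W.d i a) := by subst h; rfl

theorem ZSys.dpow_cast (k : ℕ) {i j : ℤ} (h : i = j) (a : W.X i) :
    W.dpow k j (W.cast h a) = W.cast (by rw [h]) (W.dpow k i a) := by subst h; rfl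

theorem ZSys.dpow_zero_apply (i : ℤ) (a : W.X i) :
    W.dpow 0 i a = W.cast (by simp) a := rfl

theorem ZSys.dpow_succ_apply (k : ℕ) (i : ℤ) (a : W.X i) :
    W.dpow (k+1) i a = W.cast (by push_cast; ring) (W.dpow k (i+1) (W.d i a)) := rfl

theorem ZSys.dpow_d (k : ℕ) (i : ℤ) (a : W.X i) :
    W.dpow k (i+1) (W.d i a) = W.cast (by push_cast; ring) (W.dpow (k+1) i a) := by
  rw [W.dpow_succ_apply, W.cast_cast]; exact (W.cast_rfl _ _).symm

theorem ZSys.dpow_succ_top (k : ℕ) (i : ℤ) (v : W.X i) :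
    W.dpow (k+1) i v = W.cast (by push_cast; ring) (W.d (i + k) (W.dpow k i v)) := by
  induction k generalizing i v with
  | zero =>
      rw [W.dpow_succ_apply, W.dpow_zero_apply, W.dpow_zero_apply, W.d_cast,
        W.cast_cast, W.cast_cast]
  | succ k ih =>
      rw [W.dpow_succ_apply, ih, W.cast_cast, W.dpow_d, W.d_cast, W.cast_cast]

theorem ZSys.dpow_add (a b : ℕ) (i : ℤ) (v : W.X i) :
    W.dpow (a + b) i v
      = W.cast (by push_cast; ring) (W.dpow b (i + a) (W.dpow a i v)) := by
  induction b generalizing i v with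
  | zero =>
      rw [W.dpow_zero_apply, W.cast_cast]
      exact (W.cast_rfl _ _).symm
  | succ b ih =>
      show W.dpow ((a+b)+1) i v = _
      rw [W.dpow_succ_top, ih, W.d_cast, W.cast_cast,
        W.dpow_succ_top b, W.cast_cast]

theorem ZSys.d_dpow (k : ℕ) (i : ℤ) (v : W.X i) :
    W.d (i + k) (W.dpow k i v) = W.cast (by push_cast; ring) (W.dpow (k+1) i v) := by
  rw [W.dpow_succ_top, W.cast_cast]; exact (W.cast_rfl _ _).symm

theorem ZSys.dpow_dpow (k m : ℕ) (i : ℤ) (v : W.X i) :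
    W.dpow m (i + k) (W.dpow k i v) = W.cast (by push_cast; ring) (W.dpow (k+m) i v) := by
  rw [W.dpow_add k m, W.cast_cast]; exact (W.cast_rfl _ _).symm

theorem ZSys.dpow_one (i : ℤ) (v : W.X i) :
    W.dpow 1 i v = W.cast (by push_cast; ring) (W.d i v) := by
  show W.dpow (0+1) i v = _
  rw [W.dpow_succ_apply, W.dpow_zero_apply, W.cast_cast]

theorem ZSys.van_succ (k : ℕ) (i : ℤ) (v : W.X i) :
    W.dpow (k+1) i v = 0 ↔ W.dpow k (i+1) (W.d i v) = 0 := by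
  rw [W.dpow_succ_apply, W.cast_eq_zero]

theorem ZSys.dd_zero {V : ZSys R} (hV : IsNComplex 2 V) (j : ℤ) (b : V.X j) :
    V.d (j+1) (V.d j b) = 0 := by
  have h := DFunLike.congr_fun (hV j) b
  have h2 : V.dpow (0+1+1) j b = 0 := h
  rw [V.dpow_succ_apply, V.dpow_succ_apply, V.dpow_zero_apply, V.cast_cast, V.cast_cast,
    V.cast_eq_zero] at h2
  exact h2

private theorem mod_add_lt {i m : ℤ} (hm : 0 < m) (k : ℕ) (h : i % m + k < m) :
    (i + k) % m = i % m + k ∧ (i + k) / m = i / m := by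
  induction k with
  | zero => simp
  | succ k ih =>
      have hk : (((k:ℕ)+1 : ℕ) : ℤ) = (k:ℤ) + 1 := by push_cast; ring
      have hk0 : (0:ℤ) ≤ (k:ℤ) := Int.natCast_nonneg k
      obtain ⟨h1, h2⟩ := ih (by linarith)
      have e : i + (((k:ℕ)+1 : ℕ) : ℤ) = (i + (k:ℕ)) + 1 := by push_cast; ring
      have hlt : (i + (k:ℕ)) % m + 1 < m := by rw [h1]; linarith [hk.symm ▸ h]
      constructor
      · rw [e, mod_succ_of_lt hm hlt, h1, hk]; ring
      · rw [e, div_succ_of_lt hm hlt, h2]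

section GLemmas

variable (n : ℕ) (C Xc : ZSys R) (x : Staircase R n C Xc)

theorem comm_e_apply (m : ℤ) (c : C.X (m * ((n:ℤ)+2))) :
    Xc.d (2*m) (x.xe m c)
      = x.xo m (C.cast (by push_cast; ring) (C.dpow (n+1) (m * ((n:ℤ)+2)) c)) := by
  have h := DFunLike.congr_fun (x.comm_e m) c
  simp only [LinearMap.comp_apply] at h
  exact h

theorem comm_o_apply (m : ℤ) (c : C.X (m * ((n:ℤ)+2) + (n:ℤ) + 1)) :
    Xc.d (2*m+1) (x.xo m c)
      = Xc.cast (show 2*(m+1) = 2*m+1+1 by ring)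
          (x.xe (m+1) (C.cast (show m*((n:ℤ)+2)+(n:ℤ)+1+1 = (m+1)*((n:ℤ)+2) by ring)
            (C.d (m*((n:ℤ)+2)+(n:ℤ)+1) c))) := by
  have h := DFunLike.congr_fun (x.comm_o m) c
  simp only [LinearMap.comp_apply] at h
  rw [Xc.cast_eq_iff] at h
  exact h

theorem Gcast_pair {i j : ℤ} (h : i = j)
    (a : C.X (i - i / ((n:ℤ)+3)))
    (b : Xc.X (if i % ((n:ℤ)+3) = (n:ℤ)+2 then 2*(i/((n:ℤ)+3))+1 else 2*(i/((n:ℤ)+3)))) :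
    (Gsys R n C Xc x).cast h (a, b)
      = (C.cast (by rw [h]) a, Xc.cast (by rw [h]) b) := by
  subst h; rfl

theorem stepA' {i : ℤ} (q : ℤ) (hq : i / ((n:ℤ)+3) = q) (hA : i % ((n:ℤ)+3) ≤ (n:ℤ))
    (a : C.X (i - i / ((n:ℤ)+3)))
    (b : Xc.X (if i % ((n:ℤ)+3) = (n:ℤ)+2 then 2*(i/((n:ℤ)+3))+1 else 2*(i/((n:ℤ)+3)))) :
    (Gsys R n C Xc x).d i (a, b)
      = (C.cast (show i - q + 1 = (i+1) - (i+1)/((n:ℤ)+3) by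
            rw [div_succ_of_lt (by positivity) (by linarith), hq]; ring)
          (C.d (i - q) (C.cast (by rw [hq]) a)),
         Xc.cast (show (if i % ((n:ℤ)+3) = (n:ℤ)+2 then 2*(i/((n:ℤ)+3))+1
                else 2*(i/((n:ℤ)+3)))
              = (if (i+1) % ((n:ℤ)+3) = (n:ℤ)+2 then 2*((i+1)/((n:ℤ)+3))+1
                else 2*((i+1)/((n:ℤ)+3))) by
            rw [if_neg (fun hc => by rw [hc] at hA; linarith),
              if_neg (fun hc => by
                rw [mod_succ_of_lt (by positivity) (by linarith)] at hc; linarith),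
              div_succ_of_lt (by positivity) (by linarith)])
          b) := by
  subst hq
  simp only [Gsys]
  rw [dif_pos hA]
  rfl

theorem stepB' {i : ℤ} (q : ℤ) (hq : i / ((n:ℤ)+3) = q) (hB : i % ((n:ℤ)+3) = (n:ℤ)+1)
    (a : C.X (i - i / ((n:ℤ)+3)))
    (b : Xc.X (if i % ((n:ℤ)+3) = (n:ℤ)+2 then 2*(i/((n:ℤ)+3))+1 else 2*(i/((n:ℤ)+3)))) :
    (Gsys R n C Xc x).d i (a, b)
      = (-(C.cast (show i - q + 1 = (i+1) - (i+1)/((n:ℤ)+3) by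
            rw [div_succ_of_lt (by positivity) (by rw [hB]; linarith), hq]; ring)
          (C.d (i - q) (C.cast (by rw [hq]) a))),
         Xc.cast (show 2*q+1
              = (if (i+1) % ((n:ℤ)+3) = (n:ℤ)+2 then 2*((i+1)/((n:ℤ)+3))+1
                else 2*((i+1)/((n:ℤ)+3))) by
            rw [if_pos (by
                rw [mod_succ_of_lt (by positivity) (by rw [hB]; linarith), hB]; ring),
              div_succ_of_lt (by positivity) (by rw [hB]; linarith), hq])
          (x.xo q (C.cast (show i - i/((n:ℤ)+3) = q*((n:ℤ)+2)+(n:ℤ)+1 by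
            linear_combination (-1 : ℤ) * Int.mul_ediv_add_emod i ((n : ℤ) + 3) + hB
              + ((n:ℤ)+2) * hq) a))
         + Xc.cast (show 2*q+1
              = (if (i+1) % ((n:ℤ)+3) = (n:ℤ)+2 then 2*((i+1)/((n:ℤ)+3))+1
                else 2*((i+1)/((n:ℤ)+3))) by
            rw [if_pos (by
                rw [mod_succ_of_lt (by positivity) (by rw [hB]; linarith), hB]; ring),
              div_succ_of_lt (by positivity) (by rw [hB]; linarith), hq])
          (Xc.d (2*q) (Xc.cast (show (if i % ((n:ℤ)+3) = (n:ℤ)+2 then 2*(i/((n:ℤ)+3))+1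
                else 2*(i/((n:ℤ)+3))) = 2*q by
              rw [if_neg (fun hc => by rw [hB] at hc; linarith), hq]) b))) := by
  subst hq
  simp only [Gsys]
  rw [dif_neg (fun hc => by rw [hB] at hc; linarith), dif_pos hB]
  rfl

theorem stepC' {i : ℤ} (q : ℤ) (hq : i / ((n:ℤ)+3) = q) (hc : i % ((n:ℤ)+3) = (n:ℤ)+2)
    (a : C.X (i - i / ((n:ℤ)+3)))
    (b : Xc.X (if i % ((n:ℤ)+3) = (n:ℤ)+2 then 2*(i/((n:ℤ)+3))+1 else 2*(i/((n:ℤ)+3)))) :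
    (Gsys R n C Xc x).d i (a, b)
      = (-(C.cast (show i - q = (i+1) - (i+1)/((n:ℤ)+3) by
            rw [div_succ_of_eq (by positivity) (by rw [hc]; ring), hq]; ring)
          (C.cast (by rw [hq]) a)),
         Xc.cast (show 2*(q+1)
              = (if (i+1) % ((n:ℤ)+3) = (n:ℤ)+2 then 2*((i+1)/((n:ℤ)+3))+1
                else 2*((i+1)/((n:ℤ)+3))) by
            rw [if_neg (by
                rw [mod_succ_of_eq (by positivity) (by rw [hc]; ring)]; intro h2; linarith),
              div_succ_of_eq (by positivity) (by rw [hc]; ring), hq])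
          (x.xe (q+1) (C.cast (show i - i/((n:ℤ)+3) = (q+1)*((n:ℤ)+2) by
            linear_combination (-1 : ℤ) * Int.mul_ediv_add_emod i ((n : ℤ) + 3) + hc
              + ((n:ℤ)+2) * hq) a))
         + Xc.cast (show 2*q+1+1
              = (if (i+1) % ((n:ℤ)+3) = (n:ℤ)+2 then 2*((i+1)/((n:ℤ)+3))+1
                else 2*((i+1)/((n:ℤ)+3))) by
            rw [if_neg (by
                rw [mod_succ_of_eq (by positivity) (by rw [hc]; ring)]; intro h2; linarith),
              div_succ_of_eq (by positivity) (by rw [hc]; ring), hq]; ring)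
          (Xc.d (2*q+1) (Xc.cast (show (if i % ((n:ℤ)+3) = (n:ℤ)+2 then 2*(i/((n:ℤ)+3))+1
                else 2*(i/((n:ℤ)+3))) = 2*q+1 by
              rw [if_pos hc, hq]) b))) := by
  subst hq
  simp only [Gsys]
  rw [dif_neg (fun h2 => by rw [hc] at h2; linarith),
    dif_neg (fun h2 => by rw [hc] at h2; linarith)]
  rfl

theorem runA (k : ℕ) {i : ℤ} (hk : i % ((n:ℤ)+3) + (k:ℤ) ≤ (n:ℤ)+1)
    (a : C.X (i - i / ((n:ℤ)+3)))
    (b : Xc.X (if i % ((n:ℤ)+3) = (n:ℤ)+2 then 2*(i/((n:ℤ)+3))+1 else 2*(i/((n:ℤ)+3)))) :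
    (Gsys R n C Xc x).dpow k i (a, b)
      = (C.cast (show (i - i/((n:ℤ)+3)) + (k:ℤ) = (i+(k:ℤ)) - (i+(k:ℤ))/((n:ℤ)+3) by
            obtain ⟨h1, h2⟩ := mod_add_lt (show (0:ℤ) < (n:ℤ)+3 by positivity) k
              (i := i) (by linarith)
            rw [h2]; ring)
          (C.dpow k (i - i/((n:ℤ)+3)) a),
         Xc.cast (show (if i % ((n:ℤ)+3) = (n:ℤ)+2 then 2*(i/((n:ℤ)+3))+1
                else 2*(i/((n:ℤ)+3)))
              = (if (i+(k:ℤ)) % ((n:ℤ)+3) = (n:ℤ)+2 then 2*((i+(k:ℤ))/((n:ℤ)+3))+1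
                else 2*((i+(k:ℤ))/((n:ℤ)+3))) by
            obtain ⟨h1, h2⟩ := mod_add_lt (show (0:ℤ) < (n:ℤ)+3 by positivity) k
              (i := i) (by linarith)
            have hk0 : (0:ℤ) ≤ (k:ℤ) := Int.natCast_nonneg k
            rw [if_neg (fun hcc => by rw [hcc] at hk; linarith),
              if_neg (fun hcc => by rw [h1] at hcc; linarith), h2])
          b) := by
  induction k generalizing i a b with
  | zero =>
      erw [ZSys.dpow_zero_apply (Gsys R n C Xc x)]
      simp only [ZSys.dpow_zero_apply, Gcast_pair, ZSys.cast_cast]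
      rfl
  | succ k ih =>
      have hk0 : (0:ℤ) ≤ (k:ℤ) := Int.natCast_nonneg k
      have hkc : ((k+1 : ℕ) : ℤ) = (k:ℤ)+1 := by push_cast; ring
      have hA : i % ((n:ℤ)+3) ≤ (n:ℤ) := by rw [hkc] at hk; linarith
      have hm1 : (i+1) % ((n:ℤ)+3) = i % ((n:ℤ)+3) + 1 :=
        mod_succ_of_lt (by positivity) (by linarith)
      erw [ZSys.dpow_succ_apply (Gsys R n C Xc x)]
      rw [stepA' n C Xc x (i/((n:ℤ)+3)) rfl hA,
        ih (by rw [hm1]; rw [hkc] at hk; linarith), Gcast_pair,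
        ZSys.cast_cast, ZSys.cast_cast, ZSys.cast_rfl, ZSys.dpow_cast, ZSys.cast_cast,
        ZSys.dpow_d, ZSys.cast_cast, ZSys.cast_cast]

end GLemmas

/-- for every staircase chain map `x` from an `(n+2)`-complex `C` to a
2-complex `X` of `R`-modules, the family `G_n(C, x)` is an `(n+3)`-complex. -/
theorem Gsys_isNComplex (R : Type) [Ring R] (n : ℕ) (C Xc : ZSys R)
    (hC : IsNComplex (n + 2) C) (hX : IsNComplex 2 Xc) (x : Staircase R n C Xc) :
    IsNComplex (n + 3) (Gsys R n C Xc x) := by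
  intro i
  apply LinearMap.ext
  intro v
  obtain ⟨a, b⟩ := v
  have hb := emod_bounds (i := i) (show (0:ℤ) < (n:ℤ)+3 by positivity)
  show (Gsys R n C Xc x).dpow (n+3) i (a, b) = 0
  by_cases hcase : i % ((n:ℤ)+3) ≤ (n:ℤ)+1
  · -- window starts at residue r ≤ n+1
    obtain ⟨r', hr'⟩ : ∃ r' : ℕ, (r' : ℤ) = i % ((n:ℤ)+3) :=
      ⟨(i % ((n:ℤ)+3)).toNat, Int.toNat_of_nonneg hb.1⟩
    obtain ⟨k, hk⟩ : ∃ k : ℕ, (k : ℤ) = (n:ℤ)+1 - i % ((n:ℤ)+3) :=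
      ⟨((n:ℤ)+1 - i % ((n:ℤ)+3)).toNat, Int.toNat_of_nonneg (by linarith)⟩
    have hkr : k + r' = n + 1 := by
      have h2 : ((k+r' : ℕ):ℤ) = ((n+1:ℕ):ℤ) := by push_cast; linarith
      exact_mod_cast h2
    have hr'le : r' ≤ n+1 := by omega
    have hsplit : n + 3 = k + (r' + 1 + 1) := by omega
    erw [hsplit, ZSys.dpow_add (Gsys R n C Xc x)]
    rw [ZSys.cast_eq_zero,
      runA n C Xc x k (by linarith) a b]
    have hmodk : (i + (k:ℤ)) % ((n:ℤ)+3) = (n:ℤ)+1 ∧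
        (i + (k:ℤ)) / ((n:ℤ)+3) = i / ((n:ℤ)+3) := by
      obtain ⟨h1, h2⟩ := mod_add_lt (show (0:ℤ) < (n:ℤ)+3 by positivity) k
        (i := i) (by linarith)
      exact ⟨by rw [h1]; linarith, h2⟩
    erw [ZSys.van_succ (Gsys R n C Xc x)]
    rw [stepB' n C Xc x (i/((n:ℤ)+3)) hmodk.2 hmodk.1]
    have hmodk1 : (i + (k:ℤ) + 1) % ((n:ℤ)+3) = (n:ℤ)+2 ∧
        (i + (k:ℤ) + 1) / ((n:ℤ)+3) = i / ((n:ℤ)+3) := by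
      constructor
      · rw [mod_succ_of_lt (by positivity) (by rw [hmodk.1]; linarith), hmodk.1]; ring
      · rw [div_succ_of_lt (by positivity) (by rw [hmodk.1]; linarith), hmodk.2]
    erw [ZSys.van_succ (Gsys R n C Xc x)]
    rw [stepC' n C Xc x (i/((n:ℤ)+3)) hmodk1.2 hmodk1.1]
    have hmodk2 : (i + (k:ℤ) + 1 + 1) % ((n:ℤ)+3) = 0 ∧
        (i + (k:ℤ) + 1 + 1) / ((n:ℤ)+3) = i / ((n:ℤ)+3) + 1 := by
      constructor
      · exact mod_succ_of_eq (by positivity) (by rw [hmodk1.1]; ring)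
      · rw [div_succ_of_eq (by positivity) (by rw [hmodk1.1]; ring), hmodk1.2]
    rw [runA n C Xc x r' (by rw [hmodk2.1]; linarith) _ _]
    erw [Prod.ext_iff]
    constructor
    · change _ = 0
      simp only [Prod.fst_zero, map_neg, neg_neg, ZSys.cast_cast, ZSys.cast_rfl,
        ZSys.dpow_cast, ZSys.d_cast, ZSys.dpow_d, ZSys.d_dpow, ZSys.dpow_dpow,
        ZSys.cast_eq_zero, neg_eq_zero]
      have hn2 : k + 1 + r' = n + 2 := by omega
      rw [hn2]
      exact DFunLike.congr_fun (hC _) a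
    · change _ = 0
      simp only [Prod.snd_zero, map_add, map_neg, neg_neg, ZSys.cast_cast, ZSys.cast_rfl,
        ZSys.dpow_cast, ZSys.d_cast, ZSys.dpow_d, ZSys.d_dpow, ZSys.dpow_dpow,
        comm_o_apply, comm_e_apply, ZSys.dd_zero hX, map_zero, add_zero, zero_add]
      abel
  · -- window starts at residue n+2
    have hceq : i % ((n:ℤ)+3) = (n:ℤ)+2 := by
      push_neg at hcase
      have h1 : (n:ℤ)+1+1 ≤ i % ((n:ℤ)+3) := Int.add_one_le_iff.mpr hcase
      have h2 : i % ((n:ℤ)+3) < ((n:ℤ)+2)+1 := by linarith [hb.2]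
      have h3 := Int.lt_add_one_iff.mp h2
      linarith
    have hm1 : (i+1) % ((n:ℤ)+3) = 0 :=
      mod_succ_of_eq (by positivity) (by rw [hceq]; ring)
    have hd1 : (i+1) / ((n:ℤ)+3) = i/((n:ℤ)+3) + 1 :=
      div_succ_of_eq (by positivity) (by rw [hceq]; ring)
    erw [show n+3 = (n+2)+1 from rfl, ZSys.van_succ (Gsys R n C Xc x)]
    rw [stepC' n C Xc x (i/((n:ℤ)+3)) rfl hceq]
    erw [show n+2 = (n+1)+1 from rfl, ZSys.dpow_add (Gsys R n C Xc x)]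
    rw [ZSys.cast_eq_zero]
    rw [runA n C Xc x (n+1) (by rw [hm1]; push_cast; linarith) _ _]
    have hmb := mod_add_lt (show (0:ℤ) < (n:ℤ)+3 by positivity) (n+1)
      (i := i+1) (by rw [hm1]; push_cast; linarith)
    erw [ZSys.dpow_one (Gsys R n C Xc x)]
    rw [ZSys.cast_eq_zero,
      stepB' n C Xc x (i/((n:ℤ)+3)+1) (by rw [hmb.2, hd1])
        (by rw [hmb.1, hm1]; push_cast; ring)]
    erw [Prod.ext_iff]
    constructor
    · change _ = 0
      simp only [Prod.fst_zero, map_neg, neg_neg, ZSys.cast_cast, ZSys.cast_rfl,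
        ZSys.dpow_cast, ZSys.d_cast, ZSys.dpow_d, ZSys.d_dpow, ZSys.dpow_dpow,
        ZSys.cast_eq_zero, neg_eq_zero]
      exact DFunLike.congr_fun (hC _) a
    · change _ = 0
      simp only [Prod.snd_zero, map_add, map_neg, neg_neg, ZSys.cast_cast, ZSys.cast_rfl,
        ZSys.dpow_cast, ZSys.d_cast, ZSys.dpow_d, ZSys.d_dpow, ZSys.dpow_dpow,
        comm_o_apply, comm_e_apply, ZSys.dd_zero hX, map_zero, add_zero, zero_add]
      abel
end Helpers
end

section
/- Let R be a ring and x : C → X a chain map of cochain complexes of R-modules. Deleting from the 3-complex Y(x) all objects in degrees divisible by 3 and composing the two adjacent differentials across each deleted degree yields the mapping cone of x: for every k ∈ ℤ one has D^{3k+3} ∘ D^{3k+2} = [[−d, 0], [x, d]] : C^{2k+2} ⊕ X^{2k+1} → C^{2k+3} ⊕ X^{2k+2}, so the resulting ℤ-indexed family has degree-m object C^{m+1} ⊕ X^m with differential [[−d, 0], [x, d]] in every degree, and this differential squares to zero. -/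
variable {R : Type} [Ring R]

/-- The family `Y(x)` associated with a chain map `x : C → X` of cochain complexes:
`Y^{3k} = C^{2k} ⊕ X^{2k}`, `Y^{3k+1} = C^{2k+1} ⊕ X^{2k}`, `Y^{3k+2} = C^{2k+2} ⊕ X^{2k+1}`,
with differentials `[[d,0],[0,1]]`, `[[−d,0],[x,d]]` and `[[−1,0],[x,d]]` respectively. -/
def Ysys (C Xc : ZSys R) (x : ∀ i : ℤ, C.X i →ₗ[R] Xc.X i) : ZSys R where
  X i := C.X (i - i / 3) × Xc.X ((2 * i) / 3)
  gr i := by infer_instance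
  mo i := by infer_instance
  d i :=
    if h0 : i % 3 = 0 then
      -- `[[d, 0], [0, 1]] : C^{2k} ⊕ X^{2k} → C^{2k+1} ⊕ X^{2k}`
      LinearMap.prod
        (C.cast (show i - i / 3 + 1 = (i + 1) - (i + 1) / 3 by omega) ∘ₗ C.d (i - i / 3)
          ∘ₗ LinearMap.fst R (C.X (i - i / 3)) (Xc.X ((2 * i) / 3)))
        (Xc.cast (show (2 * i) / 3 = (2 * (i + 1)) / 3 by omega)
          ∘ₗ LinearMap.snd R (C.X (i - i / 3)) (Xc.X ((2 * i) / 3)))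
    else if h1 : i % 3 = 1 then
      -- `[[−d, 0], [x, d]] : C^{2k+1} ⊕ X^{2k} → C^{2k+2} ⊕ X^{2k+1}`
      LinearMap.prod
        (-(C.cast (show i - i / 3 + 1 = (i + 1) - (i + 1) / 3 by omega) ∘ₗ C.d (i - i / 3)
          ∘ₗ LinearMap.fst R (C.X (i - i / 3)) (Xc.X ((2 * i) / 3))))
        (Xc.cast (show i - i / 3 = (2 * (i + 1)) / 3 by omega) ∘ₗ x (i - i / 3)
            ∘ₗ LinearMap.fst R (C.X (i - i / 3)) (Xc.X ((2 * i) / 3))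
          + Xc.cast (show (2 * i) / 3 + 1 = (2 * (i + 1)) / 3 by omega) ∘ₗ Xc.d ((2 * i) / 3)
            ∘ₗ LinearMap.snd R (C.X (i - i / 3)) (Xc.X ((2 * i) / 3)))
    else
      -- `[[−1, 0], [x, d]] : C^{2k+2} ⊕ X^{2k+1} → C^{2k+2} ⊕ X^{2k+2}`
      LinearMap.prod
        (-(C.cast (show i - i / 3 = (i + 1) - (i + 1) / 3 by omega)
          ∘ₗ LinearMap.fst R (C.X (i - i / 3)) (Xc.X ((2 * i) / 3))))
        (Xc.cast (show i - i / 3 = (2 * (i + 1)) / 3 by omega) ∘ₗ x (i - i / 3)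
            ∘ₗ LinearMap.fst R (C.X (i - i / 3)) (Xc.X ((2 * i) / 3))
          + Xc.cast (show (2 * i) / 3 + 1 = (2 * (i + 1)) / 3 by omega) ∘ₗ Xc.d ((2 * i) / 3)
            ∘ₗ LinearMap.snd R (C.X (i - i / 3)) (Xc.X ((2 * i) / 3)))

/-- Transport a pair along equalities of degrees. -/
def pcast (C Xc : ZSys R) {a a' b b' : ℤ} (h1 : a = a') (h2 : b = b') :
    (C.X a × Xc.X b) →ₗ[R] (C.X a' × Xc.X b') :=
  (C.cast h1).prodMap (Xc.cast h2)

/-- The mapping-cone differential `[[−d, 0], [x, d]] : C^{m+1} ⊕ X^m → C^{m+2} ⊕ X^{m+1}`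
associated with a chain map `x : C → X`. -/
def ConeD (C Xc : ZSys R) (x : ∀ i : ℤ, C.X i →ₗ[R] Xc.X i) (m : ℤ) :
    (C.X (m + 1) × Xc.X m) →ₗ[R] (C.X (m + 2) × Xc.X (m + 1)) :=
  LinearMap.prod
    (-(C.cast (show m + 1 + 1 = m + 2 by ring) ∘ₗ C.d (m + 1)
      ∘ₗ LinearMap.fst R (C.X (m + 1)) (Xc.X m)))
    (x (m + 1) ∘ₗ LinearMap.fst R (C.X (m + 1)) (Xc.X m)
      + Xc.d m ∘ₗ LinearMap.snd R (C.X (m + 1)) (Xc.X m))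


section Aux

variable {R : Type} [Ring R]

@[simp] lemma ZSys.cast_self (W : ZSys R) {i : ℤ} (h : i = i) (v : W.X i) :
    W.cast h v = v := rfl

@[simp] lemma ZSys.cast_cast_apply (W : ZSys R) {i j l : ℤ} (h1 : i = j) (h2 : j = l)
    (v : W.X i) : W.cast h2 (W.cast h1 v) = W.cast (h1.trans h2) v := by
  subst h1; subst h2; rfl

@[simp] lemma ZSys.d_cast_apply (W : ZSys R) {i j : ℤ} (h : i = j) (v : W.X i) :
    W.d j (W.cast h v) = W.cast (by rw [h]) (W.d i v) := by
  subst h; rfl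

@[simp] lemma x_cast_apply {C Xc : ZSys R} (x : ∀ i : ℤ, C.X i →ₗ[R] Xc.X i)
    {i j : ℤ} (h : i = j) (v : C.X i) :
    x j (C.cast h v) = Xc.cast h (x i v) := by
  subst h; rfl

@[simp] lemma ZSys.cast_add (W : ZSys R) {i j : ℤ} (h : i = j) (a b : W.X i) :
    W.cast h (a + b) = W.cast h a + W.cast h b := map_add _ _ _

@[simp] lemma ZSys.cast_neg (W : ZSys R) {i j : ℤ} (h : i = j) (a : W.X i) :
    W.cast h (-a) = -(W.cast h a) := map_neg _ _

@[simp] lemma ZSys.cast_zero (W : ZSys R) {i j : ℤ} (h : i = j) :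
    W.cast h (0 : W.X i) = 0 := map_zero _

lemma ysys_cast (C Xc : ZSys R) (x : ∀ i : ℤ, C.X i →ₗ[R] Xc.X i) {i j : ℤ} (h : i = j) :
    (Ysys C Xc x).cast h = pcast C Xc (by rw [h]) (by rw [h]) := by
  subst h; rfl

lemma d_d_eq_zero {W : ZSys R} (hW : IsNComplex 2 W) (i : ℤ) (v : W.X i) :
    W.d (i + 1) (W.d i v) = 0 := by
  have h := congrFun (congrArg DFunLike.coe (hW i)) v
  simp only [ZSys.dpow, LinearMap.comp_apply, LinearMap.zero_apply] at h
  have h2 : ∀ {a b : ℤ} (e : a = b) (w : W.X a), W.cast e w = 0 → w = 0 := by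
    intro a b e w hw; subst e; exact hw
  exact h2 _ _ (h2 _ _ (h2 _ _ h))

lemma chainMap_apply {C Xc : ZSys R} {x : ∀ i : ℤ, C.X i →ₗ[R] Xc.X i}
    (hx : IsChainMap C Xc x) (i : ℤ) (v : C.X i) :
    Xc.d i (x i v) = x (i + 1) (C.d i v) :=
  congrFun (congrArg DFunLike.coe (hx i)) v

end Aux

/-- deleting from the 3-complex `Y(x)` the objects in degrees divisible
by 3 and composing the two adjacent differentials across each deleted degree yields the
mapping cone of `x`: `D^{3k+3} ∘ D^{3k+2} = [[−d, 0], [x, d]]`, so the resulting family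
has degree-`m` object `C^{m+1} ⊕ X^m` with differential `[[−d, 0], [x, d]]`, and this
differential squares to zero. -/
theorem Ysys_deletion_gives_mappingCone (R : Type) [Ring R] (C Xc : ZSys R)
    (hC : IsNComplex 2 C) (hX : IsNComplex 2 Xc)
    (x : ∀ i : ℤ, C.X i →ₗ[R] Xc.X i) (hx : IsChainMap C Xc x) :
    (∀ k : ℤ,
      pcast C Xc (by omega) (by omega) ∘ₗ
          (Ysys C Xc x).d (3 * k + 3) ∘ₗ
          (Ysys C Xc x).cast (show 3 * k + 2 + 1 = 3 * k + 3 by ring) ∘ₗ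
          (Ysys C Xc x).d (3 * k + 2) ∘ₗ
          pcast C Xc (by omega) (by omega)
        = ConeD C Xc x (2 * k + 1)) ∧
    (∀ m : ℤ, ConeD C Xc x (m + 1) ∘ₗ pcast C Xc (by ring) rfl ∘ₗ ConeD C Xc x m = 0) := by
  constructor
  · intro k
    rw [ysys_cast]
    simp only [Ysys]
    rw [dif_neg (by omega : ¬ (3*k+2) % 3 = 0), dif_neg (by omega : ¬ (3*k+2) % 3 = 1),
        dif_pos (by omega : (3*k+3) % 3 = 0)]
    apply LinearMap.ext
    rintro ⟨u, v⟩
    erw [LinearMap.comp_apply, LinearMap.comp_apply, LinearMap.comp_apply, LinearMap.comp_apply, LinearMap.prodMap_apply, LinearMap.prod_apply, LinearMap.prodMap_apply, LinearMap.prod_apply, LinearMap.prodMap_apply]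
    simp [pcast, ConeD, Prod.ext_iff]
  · intro m
    apply LinearMap.ext
    rintro ⟨u, v⟩
    simp [pcast, ConeD, Prod.ext_iff, d_d_eq_zero hC, d_d_eq_zero hX, chainMap_apply hx]
end
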